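/- arXiv:2511.10525 — 2 statements merged into one kernel-verified Lean document; each statement's English description precedes it below -/
import Mathlib

section
/- Fix integers n ≥ 2, N ≥ 2 and a real number q > 0. On (ℝⁿ)^{⊗N} let r_j act as the matrix r (r(e_x ⊗ e_y) = e_x ⊗ e_y if x = y; q⁻¹ e_y ⊗ e_x if x < y; q⁻¹ e_y ⊗ e_x + (1 − q⁻²) e_x ⊗ e_y if x > y) on factors j, j+1, and let H = Σ_{j=1}^{N−1} r_j be the U_q(gl_n)-invariant open spin chain Hamiltonian. Then for all nonnegative integers k_1,…,k_n with k_1 + ⋯ + k_n = N, the q-Dicke state b^{(0)}_{k_1…k_n} = Σ_{w ∈ W(k_1,…,k_n)} q^{inv(w)} e_{w_1} ⊗ ⋯ ⊗ e_{w_N} is an eigenvector of H with eigenvalue N − 1: H b^{(0)}_{k_1…k_n} = (N−1) b^{(0)}_{k_1…k_n}. -/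
open Finset Matrix

noncomputable section

/-- Jimbo's `U_q(gl_n)`-invariant braid matrix `r` on `ℝⁿ ⊗ ℝⁿ`. -/
def rMatR (n : ℕ) (q : ℝ) : Matrix (Fin n × Fin n) (Fin n × Fin n) ℝ := fun out inp =>
  if inp.1 = inp.2 then (if out = inp then 1 else 0)
  else (if out = (inp.2, inp.1) then q⁻¹ else 0) +
    (if inp.2 < inp.1 ∧ out = inp then 1 - q⁻¹ ^ 2 else 0)

/-- The operator `r_j` acting as `rMatR` on tensor factors `j, j+1` (0-indexed). -/
def ropR (n N : ℕ) (q : ℝ) (j : ℕ) : Matrix (Fin N → Fin n) (Fin N → Fin n) ℝ :=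
  fun f g =>
    if hj : j + 1 < N then
      rMatR n q (f ⟨j, Nat.lt_of_succ_lt hj⟩, f ⟨j + 1, hj⟩)
          (g ⟨j, Nat.lt_of_succ_lt hj⟩, g ⟨j + 1, hj⟩) *
        (if ∀ k : Fin N, k.1 ≠ j → k.1 ≠ j + 1 → f k = g k then 1 else 0)
    else if f = g then 1 else 0

/-- The `U_q(gl_n)`-invariant open spin chain Hamiltonian `H = Σ_{j=1}^{N−1} r_j`. -/
def HamR (n N : ℕ) (q : ℝ) : Matrix (Fin N → Fin n) (Fin N → Fin n) ℝ :=
  ∑ j ∈ Finset.range (N - 1), ropR n N q j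

/-- number of letters `i` in the word `w`. -/
def content {n N : ℕ} (w : Fin N → Fin n) (i : Fin n) : ℕ :=
  (Finset.univ.filter fun k => w k = i).card

/-- number of inversions of the word `w`. -/
def invw {n N : ℕ} (w : Fin N → Fin n) : ℕ :=
  (Finset.univ.filter fun p : Fin N × Fin N => p.1 < p.2 ∧ w p.2 < w p.1).card

/-- The (unnormalized) q-Dicke state `b⁰_{k₁…k_n}` in `(ℝⁿ)^{⊗N}`. -/
def bstateR (n N : ℕ) (q : ℝ) (k : Fin n → ℕ) : (Fin N → Fin n) → ℝ :=
  ∑ w ∈ Finset.univ.filter (fun w : Fin N → Fin n => ∀ i, content w i = k i),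
    (q ^ invw w) • (Pi.single w 1 : (Fin N → Fin n) → ℝ)

/- ### auxiliary lemmas -/

lemma swap_lt {N : ℕ} (p p' a b : Fin N) (h : (p : ℕ) + 1 = (p' : ℕ)) (hab : a < b)
    (hne : ¬(a = p ∧ b = p')) : Equiv.swap p p' a < Equiv.swap p p' b := by
  simp only [Equiv.swap_apply_def]
  split_ifs <;> (simp only [Fin.lt_def, Fin.ext_iff, not_and] at *) <;> omega

lemma content_comp {n N : ℕ} (f : Fin N → Fin n) (e : Equiv.Perm (Fin N)) (i : Fin n) :
    content (f ∘ e) i = content f i := by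
  unfold content
  have : (Finset.univ.filter fun k => (f ∘ e) k = i)
      = (Finset.univ.filter fun k => f k = i).map e.symm.toEmbedding := by
    ext k
    simp [Equiv.symm_apply_eq]
  rw [this, Finset.card_map]

lemma invw_swap {n N : ℕ} (f : Fin N → Fin n) (p p' : Fin N) (h : (p : ℕ) + 1 = (p' : ℕ))
    (hf : f p < f p') : invw (f ∘ Equiv.swap p p') = invw f + 1 := by
  classical
  set s := Equiv.swap p p' with hs
  have hss : ∀ x, s (s x) = x := fun x => Equiv.swap_apply_self p p' x
  have key : (Finset.univ.filter fun ab : Fin N × Fin N =>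
        ab.1 < ab.2 ∧ (f ∘ s) ab.2 < (f ∘ s) ab.1)
      = insert (p, p') ((Finset.univ.filter fun ab : Fin N × Fin N =>
        ab.1 < ab.2 ∧ f ab.2 < f ab.1).image fun ab => (s ab.1, s ab.2)) := by
    ext ⟨a, b⟩
    simp only [mem_filter, mem_univ, true_and, mem_insert, mem_image, Prod.mk.injEq,
      Prod.exists, Function.comp_apply]
    constructor
    · rintro ⟨hab, hinv⟩
      by_cases hc : a = p ∧ b = p'
      · exact Or.inl ⟨hc.1, hc.2⟩
      · refine Or.inr ⟨s a, s b, ⟨swap_lt p p' a b h hab hc, hinv⟩, hss a, hss b⟩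
    · rintro (⟨ha, hb⟩ | ⟨c, d, ⟨hcd, hinv⟩, hc, hd⟩)
      · subst ha; subst hb
        refine ⟨Fin.lt_def.2 (by omega), ?_⟩
        rw [hs, Equiv.swap_apply_right, Equiv.swap_apply_left]
        exact hf
      · subst hc; subst hd
        have hne : ¬(c = p ∧ d = p') := by
          rintro ⟨rfl, rfl⟩; exact absurd hinv (not_lt.2 hf.le)
        exact ⟨swap_lt p p' c d h hcd hne, by rw [hss, hss]; exact hinv⟩
  have hnotmem : (p, p') ∉ (Finset.univ.filter fun ab : Fin N × Fin N =>
      ab.1 < ab.2 ∧ f ab.2 < f ab.1).image fun ab => (s ab.1, s ab.2) := by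
    simp only [mem_image, mem_filter, mem_univ, true_and, Prod.mk.injEq, Prod.exists, not_exists,
      not_and]
    rintro c d ⟨hcd, _⟩ hc hd
    have : c = s p := by rw [← hc, hss]
    have hd' : d = s p' := by rw [← hd, hss]
    rw [hs, Equiv.swap_apply_left] at this
    rw [hs, Equiv.swap_apply_right] at hd'
    subst this; subst hd'
    exact absurd hcd (not_lt.2 (Fin.le_def.2 (by omega)))
  have hinj : Function.Injective fun ab : Fin N × Fin N => (s ab.1, s ab.2) := by
    rintro ⟨a, b⟩ ⟨c, d⟩ hcd
    simp only [Prod.mk.injEq] at hcd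
    exact Prod.ext (s.injective hcd.1) (s.injective hcd.2)
  unfold invw
  rw [key, Finset.card_insert_of_notMem hnotmem, Finset.card_image_of_injective _ hinj]

lemma bstate_apply (n N : ℕ) (q : ℝ) (k : Fin n → ℕ) (g : Fin N → Fin n) :
    bstateR n N q k g = if (∀ i, content g i = k i) then q ^ invw g else 0 := by
  classical
  unfold bstateR
  rw [Finset.sum_apply]
  simp only [Pi.smul_apply, Pi.single_apply, smul_eq_mul, mul_ite, mul_one, mul_zero]
  rw [Finset.sum_ite_eq (Finset.univ.filter fun w : Fin N → Fin n => ∀ i, content w i = k i) g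
    (fun w => q ^ invw w)]
  simp

lemma rMat_diag_ne {n : ℕ} (q : ℝ) (a x y : Fin n) (h : ¬(x = a ∧ y = a)) :
    rMatR n q (a, a) (x, y) = 0 := by
  unfold rMatR; dsimp only
  split_ifs with u1 u2 u3 u4 u5 u6 u7 u8 u9 u10
  all_goals try (exfalso; simp only [Fin.lt_def, Fin.ext_iff, Prod.mk.injEq, not_true, eq_self_iff_true, and_true, true_and, and_self, not_lt] at *; omega)
  all_goals try (exfalso; simp only [Fin.lt_def, Fin.ext_iff, Prod.mk.injEq, not_true, eq_self_iff_true, and_true, true_and, and_self, not_lt] at *; done)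
  all_goals first | norm_num | ring

lemma rMat_lt_ne {n : ℕ} (q : ℝ) (a b x y : Fin n) (hab : a < b) (h : ¬(x = b ∧ y = a)) :
    rMatR n q (a, b) (x, y) = 0 := by
  unfold rMatR; dsimp only
  split_ifs with u1 u2 u3 u4 u5 u6 u7 u8 u9 u10
  all_goals try (exfalso; simp only [Fin.lt_def, Fin.ext_iff, Prod.mk.injEq, not_true, eq_self_iff_true, and_true, true_and, and_self, not_lt] at *; omega)
  all_goals try (exfalso; simp only [Fin.lt_def, Fin.ext_iff, Prod.mk.injEq, not_true, eq_self_iff_true, and_true, true_and, and_self, not_lt] at *; done)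
  all_goals first | norm_num | ring

lemma rMat_lt_swap {n : ℕ} (q : ℝ) (a b : Fin n) (hab : a < b) :
    rMatR n q (a, b) (b, a) = q⁻¹ := by
  unfold rMatR; dsimp only
  split_ifs with u1 u2 u3 u4 u5 u6 u7 u8 u9 u10
  all_goals try (exfalso; simp only [Fin.lt_def, Fin.ext_iff, Prod.mk.injEq, not_true, eq_self_iff_true, and_true, true_and, and_self, not_lt] at *; omega)
  all_goals try (exfalso; simp only [Fin.lt_def, Fin.ext_iff, Prod.mk.injEq, not_true, eq_self_iff_true, and_true, true_and, and_self, not_lt] at *; done)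
  all_goals first | norm_num | ring

lemma rMat_gt_ne {n : ℕ} (q : ℝ) (a b x y : Fin n) (hab : b < a)
    (h1 : ¬(x = b ∧ y = a)) (h2 : ¬(x = a ∧ y = b)) : rMatR n q (a, b) (x, y) = 0 := by
  unfold rMatR; dsimp only
  split_ifs with u1 u2 u3 u4 u5 u6 u7 u8 u9 u10
  all_goals try (exfalso; simp only [Fin.lt_def, Fin.ext_iff, Prod.mk.injEq, not_true, eq_self_iff_true, and_true, true_and, and_self, not_lt] at *; omega)
  all_goals try (exfalso; simp only [Fin.lt_def, Fin.ext_iff, Prod.mk.injEq, not_true, eq_self_iff_true, and_true, true_and, and_self, not_lt] at *; done)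
  all_goals first | norm_num | ring

lemma rMat_gt_swap {n : ℕ} (q : ℝ) (a b : Fin n) (hab : b < a) :
    rMatR n q (a, b) (b, a) = q⁻¹ := by
  unfold rMatR; dsimp only
  split_ifs with u1 u2 u3 u4 u5 u6 u7 u8 u9 u10
  all_goals try (exfalso; simp only [Fin.lt_def, Fin.ext_iff, Prod.mk.injEq, not_true, eq_self_iff_true, and_true, true_and, and_self, not_lt] at *; omega)
  all_goals try (exfalso; simp only [Fin.lt_def, Fin.ext_iff, Prod.mk.injEq, not_true, eq_self_iff_true, and_true, true_and, and_self, not_lt] at *; done)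
  all_goals first | norm_num | ring

lemma rMat_gt_diag {n : ℕ} (q : ℝ) (a b : Fin n) (hab : b < a) :
    rMatR n q (a, b) (a, b) = 1 - q⁻¹ ^ 2 := by
  unfold rMatR; dsimp only
  split_ifs with u1 u2 u3 u4 u5 u6 u7 u8 u9 u10
  all_goals try (exfalso; simp only [Fin.lt_def, Fin.ext_iff, Prod.mk.injEq, not_true, eq_self_iff_true, and_true, true_and, and_self, not_lt] at *; omega)
  all_goals try (exfalso; simp only [Fin.lt_def, Fin.ext_iff, Prod.mk.injEq, not_true, eq_self_iff_true, and_true, true_and, and_self, not_lt] at *; done)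
  all_goals first | norm_num | ring

lemma rMat_diag_diag {n : ℕ} (q : ℝ) (a : Fin n) : rMatR n q (a, a) (a, a) = 1 := by
  unfold rMatR; simp

/- ### the eigenvector property for a single `r_j` -/

lemma rop_mulVec (n N : ℕ) (q : ℝ) (hq : 0 < q) (k : Fin n → ℕ) (j : ℕ) (hj : j + 1 < N) :
    (ropR n N q j).mulVec (bstateR n N q k) = bstateR n N q k := by
  classical
  funext f
  set p : Fin N := ⟨j, Nat.lt_of_succ_lt hj⟩ with hp
  set p' : Fin N := ⟨j + 1, hj⟩ with hp'
  have hpp : (p : ℕ) + 1 = (p' : ℕ) := rfl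
  set s := Equiv.swap p p' with hsdef
  have hrop : ∀ g, ropR n N q j f g =
      rMatR n q (f p, f p') (g p, g p') *
        (if ∀ k : Fin N, k.1 ≠ j → k.1 ≠ j + 1 → f k = g k then 1 else 0) := by
    intro g; unfold ropR; rw [dif_pos hj]
  -- identification of words agreeing everywhere
  have hid : ∀ g : Fin N → Fin n, (∀ k : Fin N, k.1 ≠ j → k.1 ≠ j + 1 → f k = g k) →
      g p = f p → g p' = f p' → g = f := by
    intro g hout hgp hgp'
    funext x
    by_cases hx : x.1 = j
    · have : x = p := Fin.ext hx
      subst this; exact hgp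
    · by_cases hx' : x.1 = j + 1
      · have : x = p' := Fin.ext hx'
        subst this; exact hgp'
      · exact (hout x hx hx').symm
  have hsp : (f ∘ s) p = f p' := by
    simp [hsdef, Equiv.swap_apply_left]
  have hsp' : (f ∘ s) p' = f p := by
    simp [hsdef, Equiv.swap_apply_right]
  have hswap_out : ∀ x : Fin N, x.1 ≠ j → x.1 ≠ j + 1 → f x = (f ∘ s) x := by
    intro x hx hx'
    have h1 : x ≠ p := fun he => hx (by rw [he])
    have h2 : x ≠ p' := fun he => hx' (by rw [he])
    simp [hsdef, Equiv.swap_apply_of_ne_of_ne h1 h2]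
  have hcomp : (f ∘ s) ∘ s = f := by
    funext x; simp [hsdef, Equiv.swap_apply_self]
  have hcont : ∀ i, content (f ∘ s) i = content f i := content_comp f s
  have hmv : (ropR n N q j).mulVec (bstateR n N q k) f
      = ∑ g : Fin N → Fin n, ropR n N q j f g * bstateR n N q k g := rfl
  rw [hmv]
  rcases lt_trichotomy (f p) (f p') with hlt | heq | hgt
  · -- f p < f p' : only the swapped word contributes, with weight q⁻¹
    rw [Finset.sum_eq_single_of_mem (f ∘ s) (Finset.mem_univ _) ?_]
    · rw [hrop, hsp, hsp', rMat_lt_swap q _ _ hlt,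
        if_pos (fun x hx hx' => hswap_out x hx hx'), mul_one,
        bstate_apply, bstate_apply, invw_swap f p p' hpp hlt]
      simp only [hcont]
      by_cases hc : ∀ i, content f i = k i
      · rw [if_pos hc, if_pos hc, pow_succ, mul_comm (q ^ invw f) q, ← mul_assoc,
          inv_mul_cancel₀ hq.ne', one_mul]
      · rw [if_neg hc, if_neg hc, mul_zero]
    · intro g _ hgne
      rw [hrop]
      by_cases hagree : ∀ x : Fin N, x.1 ≠ j → x.1 ≠ j + 1 → f x = g x
      · rw [if_pos hagree, mul_one]
        have hne : ¬(g p = f p' ∧ g p' = f p) := by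
          rintro ⟨h1, h2⟩
          apply hgne
          funext x
          by_cases hx : x.1 = j
          · have : x = p := Fin.ext hx
            subst this; rw [h1, hsp]
          · by_cases hx' : x.1 = j + 1
            · have : x = p' := Fin.ext hx'
              subst this; rw [h2, hsp']
            · rw [← hagree x hx hx', hswap_out x hx hx']
        rw [rMat_lt_ne q _ _ _ _ hlt hne, zero_mul]
      · rw [if_neg hagree, mul_zero, zero_mul]
  · -- f p = f p' : only f itself contributes, with weight 1
    rw [Finset.sum_eq_single_of_mem f (Finset.mem_univ _) ?_]
    · rw [hrop, if_pos (fun _ _ _ => rfl), mul_one, heq, rMat_diag_diag, one_mul]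
    · intro g _ hgne
      rw [hrop]
      by_cases hagree : ∀ x : Fin N, x.1 ≠ j → x.1 ≠ j + 1 → f x = g x
      · rw [if_pos hagree, mul_one]
        have hne : ¬(g p = f p' ∧ g p' = f p') := by
          rintro ⟨h1, h2⟩
          exact hgne (hid g hagree (by rw [h1, heq]) h2)
        rw [heq, rMat_diag_ne q _ _ _ hne, zero_mul]
      · rw [if_neg hagree, mul_zero, zero_mul]
  · -- f p' < f p : both f and the swapped word contribute
    have hfne : f ≠ f ∘ s := by
      intro he
      have := congrFun he p
      rw [hsp] at this
      exact absurd this (ne_of_gt hgt)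
    rw [Finset.sum_eq_add_of_mem f (f ∘ s) (Finset.mem_univ _) (Finset.mem_univ _) hfne ?_]
    · have hswlt : (f ∘ s) p < (f ∘ s) p' := by rw [hsp, hsp']; exact hgt
      have hinv : invw f = invw (f ∘ s) + 1 := by
        have := invw_swap (f ∘ s) p p' hpp hswlt
        rwa [hcomp] at this
      rw [hrop, hrop, hsp, hsp', if_pos (fun _ _ _ => rfl),
        if_pos (fun x hx hx' => hswap_out x hx hx'), mul_one, mul_one,
        rMat_gt_diag q _ _ hgt, rMat_gt_swap q _ _ hgt,
        bstate_apply, bstate_apply]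
      simp only [hcont]
      by_cases hc : ∀ i, content f i = k i
      · rw [if_pos hc, if_pos hc, hinv, pow_succ]
        have hq0 : q ≠ 0 := hq.ne'
        field_simp
        ring
      · rw [if_neg hc, if_neg hc, mul_zero, mul_zero, add_zero]
    · intro g _ hg
      obtain ⟨hg1, hg2⟩ := hg
      rw [hrop]
      by_cases hagree : ∀ x : Fin N, x.1 ≠ j → x.1 ≠ j + 1 → f x = g x
      · rw [if_pos hagree, mul_one]
        have hne1 : ¬(g p = f p' ∧ g p' = f p) := by
          rintro ⟨h1, h2⟩
          apply hg2
          funext x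
          by_cases hx : x.1 = j
          · have : x = p := Fin.ext hx
            subst this; rw [h1, hsp]
          · by_cases hx' : x.1 = j + 1
            · have : x = p' := Fin.ext hx'
              subst this; rw [h2, hsp']
            · rw [← hagree x hx hx', hswap_out x hx hx']
        have hne2 : ¬(g p = f p ∧ g p' = f p') := by
          rintro ⟨h1, h2⟩
          exact hg1 (hid g hagree h1 h2)
        rw [rMat_gt_ne q _ _ _ _ hgt hne1 hne2, zero_mul]
      · rw [if_neg hagree, mul_zero, zero_mul]

/- ### main theorem -/

/-- every q-Dicke state `b⁰_{k₁…k_n}` is an eigenvector of the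
`U_q(gl_n)`-invariant open spin chain Hamiltonian `H = Σ_j r_j` with eigenvalue `N − 1`. -/
theorem stmt11 (n N : ℕ) (hn : 2 ≤ n) (hN : 2 ≤ N) (q : ℝ) (hq : 0 < q)
    (k : Fin n → ℕ) (hk : ∑ i, k i = N) :
    (HamR n N q).mulVec (bstateR n N q k) = ((N : ℝ) - 1) • bstateR n N q k := by
  classical
  have key : ∀ j ∈ Finset.range (N - 1),
      (ropR n N q j).mulVec (bstateR n N q k) = bstateR n N q k := by
    intro j hj
    exact rop_mulVec n N q hq k j (by have := Finset.mem_range.1 hj; omega)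
  funext x
  have h1 : (HamR n N q).mulVec (bstateR n N q k) x
      = ∑ j ∈ Finset.range (N - 1), ((ropR n N q j).mulVec (bstateR n N q k)) x := by
    simp only [HamR, Matrix.mulVec, dotProduct, Matrix.sum_apply, Finset.sum_apply, Finset.sum_mul]
    rw [Finset.sum_comm]
  rw [h1, Finset.sum_congr rfl (fun j hj => congrFun (key j hj) x),
    Finset.sum_const, Finset.card_range]
  have : ((N - 1 : ℕ) : ℝ) = (N : ℝ) - 1 := by
    have : 1 ≤ N := by omega
    push_cast [Nat.cast_sub this]
    ring
  rw [← Nat.cast_smul_eq_nsmul ℝ, this]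
  simp

end
end

section
/- Let n be an odd prime, V = ℂ^{ℤ_n}, and r ∈ End(V ⊗ V) the dihedral quandle braid matrix r(e_a ⊗ e_b) = e_b ⊗ e_{2b−a} (arithmetic mod n). Let ω = e^{2πi/n}. Then V ⊗ V decomposes as the orthogonal direct sum of the eigenspaces of r: V ⊗ V = ⊕_{k=1}^{n} V^{(ω^k)}, where for k = 1,…,n−1 the eigenspace V^{(ω^k)} of the eigenvalue ω^k has dimension n − 1, and the eigenspace V^{(1)} of the eigenvalue 1 has dimension 2n − 1. Explicitly, for each k the vectors G_k(e_0 ⊗ e_m), m = 1,…,n−1, with G_k = (1/√n) Σ_{j=0}^{n−1} ω^{−kj} r^j, are an orthonormal basis of V^{(ω^k)} for k ≠ n, while V^{(1)} has orthonormal basis {G_n(e_0 ⊗ e_m) : m = 1,…,n−1} ∪ {e_m ⊗ e_m : m ∈ ℤ_n}. -/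
open Finset Matrix Complex

noncomputable section

/-- The linearization of the dihedral quandle braid solution:
`r(e_a ⊗ e_b) = e_b ⊗ e_{2b−a}`, arithmetic mod `n`. -/
def rdq (n : ℕ) : Matrix (ZMod n × ZMod n) (ZMod n × ZMod n) ℂ := fun out inp =>
  if out = (inp.2, 2 * inp.2 - inp.1) then 1 else 0

/-- `ω = e^{2πi/n}`. -/
def dqω (n : ℕ) : ℂ := Complex.exp (2 * Real.pi * Complex.I / n)

/-- The generator `G_k = (1/√n) Σ_{j<n} ω^{−kj} r^j`. -/
def Gop (n : ℕ) [NeZero n] (k : ℕ) : Matrix (ZMod n × ZMod n) (ZMod n × ZMod n) ℂ :=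
  ((Real.sqrt n : ℂ))⁻¹ • ∑ j ∈ Finset.range n, (dqω n) ^ (-((k * j : ℕ) : ℤ)) • rdq n ^ j

/-- The vector `G_k (e_0 ⊗ e_m)`. -/
def Gvec (n : ℕ) [NeZero n] (k : ℕ) (m : ZMod n) : ZMod n × ZMod n → ℂ :=
  (Gop n k).mulVec (Pi.single ((0 : ZMod n), m) 1)

/-- The Hermitian dot product on `ℂ^{ZMod n × ZMod n}`. -/
def dotc {α : Type*} [Fintype α] (u v : α → ℂ) : ℂ :=
  ∑ f, (starRingEnd ℂ) (u f) * v f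

/-- The claimed orthonormal basis of the eigenvalue-1 eigenspace:
the vectors `G_n (e_0 ⊗ e_m)` for `m ≠ 0` together with the diagonal vectors `e_m ⊗ e_m`. -/
def eigOneBasis (n : ℕ) [NeZero n] :
    ({m : ZMod n // m ≠ 0} ⊕ ZMod n) → (ZMod n × ZMod n → ℂ) :=
  Sum.elim (fun m => Gvec n n m.1)
    (fun m => (Pi.single (m, m) 1 : ZMod n × ZMod n → ℂ))

namespace S19

set_option linter.unusedSectionVars false

variable (n : ℕ) [NeZero n]

abbrev Pt := fun (n : ℕ) => ZMod n × ZMod n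

/-! ### roots of unity -/

lemma hωprim : IsPrimitiveRoot (dqω n) n := Complex.isPrimitiveRoot_exp n (NeZero.ne n)

lemma hω1 : dqω n ^ n = 1 := (hωprim n).pow_eq_one

lemma hωne : dqω n ≠ 0 := Complex.exp_ne_zero _

lemma pow_congr {x y : ℕ} (h : (x : ZMod n) = y) : dqω n ^ x = dqω n ^ y := by
  rw [pow_eq_pow_mod x (hω1 n), pow_eq_pow_mod y (hω1 n)]
  congr 1
  exact (ZMod.natCast_eq_natCast_iff x y n).1 h

lemma abs_ω : ‖dqω n‖ = 1 := by
  rw [dqω, show (2 * Real.pi * Complex.I / n : ℂ) = ((2 * Real.pi / n : ℝ) : ℂ) * Complex.I by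
    push_cast; ring, Complex.norm_exp_ofReal_mul_I]

lemma conj_ω_pow (x : ℕ) : (starRingEnd ℂ) (dqω n ^ x) * dqω n ^ x = 1 := by
  rw [map_pow, ← mul_pow]
  have : (starRingEnd ℂ) (dqω n) * dqω n = 1 := by
    rw [mul_comm, Complex.mul_conj, Complex.normSq_eq_norm_sq, abs_ω]
    norm_num
  rw [this, one_pow]

/-- the character `E a = ω ^ a.val` -/
def E (a : ZMod n) : ℂ := dqω n ^ a.val

lemma E_def (x : ℕ) : E n (x : ZMod n) = dqω n ^ x := by
  rw [E]; exact pow_congr n (by rw [ZMod.natCast_val, ZMod.cast_id])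

lemma E_zero : E n 0 = 1 := by rw [E, ZMod.val_zero, pow_zero]

lemma E_add (a b : ZMod n) : E n (a + b) = E n a * E n b := by
  rw [E, E, E, ← pow_add]
  exact pow_congr n (by push_cast [ZMod.natCast_val, ZMod.cast_id]; ring)

lemma E_ne (a : ZMod n) : E n a ≠ 0 := pow_ne_zero _ (hωne n)

lemma conj_E (a : ZMod n) : (starRingEnd ℂ) (E n a) = (E n a)⁻¹ :=
  eq_inv_of_mul_eq_one_left (conj_ω_pow n a.val)

lemma E_inv (a : ZMod n) : (E n a)⁻¹ = E n (-a) :=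
  (eq_inv_of_mul_eq_one_left (by rw [← E_add, neg_add_cancel, E_zero])).symm

lemma E_eq_one_iff (a : ZMod n) : E n a = 1 ↔ a = 0 := by
  constructor
  · intro h
    have hd := ((hωprim n).pow_eq_one_iff_dvd a.val).1 h
    have hv : a.val = 0 := Nat.eq_zero_of_dvd_of_lt hd (ZMod.val_lt a)
    exact (ZMod.val_eq_zero a).mp hv
  · rintro rfl; exact E_zero n

lemma E_nsmul (t : ZMod n) (c : ℕ) : E n ((c : ZMod n) * t) = E n t ^ c := by
  induction c with
  | zero => simp [E_zero]
  | succ c ih =>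
    have : (((c + 1 : ℕ) : ZMod n)) * t = (c : ZMod n) * t + t := by push_cast; ring
    rw [this, E_add, ih, pow_succ]

lemma sum_zmod_eq_range (g : ZMod n → ℂ) :
    ∑ j ∈ Finset.range n, g (j : ZMod n) = ∑ c : ZMod n, g c := by
  refine Finset.sum_bij' (fun j _ => ((j : ZMod n))) (fun c _ => c.val) ?_ ?_ ?_ ?_ ?_
  · intro j hj; exact Finset.mem_univ _
  · intro c _; exact Finset.mem_range.2 (ZMod.val_lt c)
  · intro j hj; exact ZMod.val_cast_of_lt (Finset.mem_range.1 hj)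
  · intro c _; exact ZMod.natCast_rightInverse c
  · intro j _; rfl

lemma sum_E (t : ZMod n) : (∑ c : ZMod n, E n (c * t)) = if t = 0 then (n : ℂ) else 0 := by
  have h1 : ∀ c : ZMod n, E n (c * t) = E n t ^ c.val := by
    intro c
    rw [← E_nsmul, ZMod.natCast_rightInverse c]
  simp only [h1]
  rw [← sum_zmod_eq_range n (fun c => E n t ^ c.val)]
  have h2 : ∀ j ∈ Finset.range n, E n t ^ ((j : ZMod n)).val = E n t ^ j := by
    intro j hj
    rw [ZMod.val_cast_of_lt (Finset.mem_range.1 hj)]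
  rw [Finset.sum_congr rfl h2]
  by_cases ht : t = 0
  · rw [if_pos ht, ht, E_zero]
    simp
  · rw [if_neg ht, geom_sum_eq (fun h => ht ((E_eq_one_iff n t).1 h)) n]
    have : E n t ^ n = 1 := by
      rw [E, ← pow_mul, mul_comm, pow_mul, hω1, one_pow]
    rw [this, sub_self, zero_div]

/-! ### matrix lemmas -/

lemma sum_mulVec' {ι P : Type*} [Fintype P] [DecidableEq P] (s : Finset ι)
    (A : ι → Matrix P P ℂ) (v : P → ℂ) :
    (∑ j ∈ s, A j).mulVec v = ∑ j ∈ s, (A j).mulVec v := by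
  funext out
  simp [Matrix.mulVec, dotProduct, Finset.sum_apply, Finset.sum_mul, Matrix.sum_apply]
  rw [Finset.sum_comm]

lemma rdq_pow_entry (j : ℕ) (out inp : Pt n) :
    (rdq n ^ j) out inp =
      if out = (inp.1 + (j : ZMod n) * (inp.2 - inp.1), inp.2 + (j : ZMod n) * (inp.2 - inp.1))
      then 1 else 0 := by
  induction j generalizing out inp with
  | zero => simp [Matrix.one_apply, Prod.ext_iff]
  | succ j ih =>
    rw [pow_succ, Matrix.mul_apply]
    have hterm : ∀ mid : Pt n, (rdq n ^ j) out mid * rdq n mid inp =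
        if mid = ((inp.2, 2 * inp.2 - inp.1) : Pt n) then (rdq n ^ j) out mid else 0 := by
      intro mid
      show _ * (if mid = ((inp.2, 2 * inp.2 - inp.1) : Pt n) then (1:ℂ) else 0) = _
      split <;> simp
    simp only [hterm]
    rw [Finset.sum_ite_eq' Finset.univ ((inp.2, 2 * inp.2 - inp.1) : Pt n)
        (fun mid => (rdq n ^ j) out mid), if_pos (Finset.mem_univ _), ih]
    dsimp only
    have h1 : inp.2 + (j : ZMod n) * (2 * inp.2 - inp.1 - inp.2)
        = inp.1 + ((j + 1 : ℕ) : ZMod n) * (inp.2 - inp.1) := by push_cast; ring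
    have h2 : 2 * inp.2 - inp.1 + (j : ZMod n) * (2 * inp.2 - inp.1 - inp.2)
        = inp.2 + ((j + 1 : ℕ) : ZMod n) * (inp.2 - inp.1) := by push_cast; ring
    rw [h1, h2]

lemma rdq_mulVec (v : Pt n → ℂ) :
    (rdq n).mulVec v = fun out => v (2 * out.1 - out.2, out.1) := by
  funext out
  rw [Matrix.mulVec, dotProduct]
  have hterm : ∀ inp : Pt n, rdq n out inp * v inp =
      if inp = ((2 * out.1 - out.2, out.1) : Pt n) then v inp else 0 := by
    intro inp
    show (if out = (inp.2, 2 * inp.2 - inp.1) then (1:ℂ) else 0) * v inp = _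
    have hiff : out = ((inp.2, 2 * inp.2 - inp.1) : Pt n)
        ↔ inp = ((2 * out.1 - out.2, out.1) : Pt n) := by
      constructor
      · rintro rfl; simp [Prod.ext_iff]
      · rintro rfl; simp [Prod.ext_iff]
    simp only [hiff]; split <;> simp
  simp only [hterm]
  rw [Finset.sum_ite_eq' Finset.univ _ v, if_pos (Finset.mem_univ _)]

lemma Gvec_eq (k : ℕ) (m : ZMod n) : Gvec n k m = fun out =>
    ((Real.sqrt n : ℂ))⁻¹ * ∑ j ∈ Finset.range n, dqω n ^ (-((k * j : ℕ) : ℤ)) *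
      (if out = (((j : ZMod n) * m, m + (j : ZMod n) * m) : Pt n) then 1 else 0) := by
  funext out
  rw [Gvec, Gop, Matrix.smul_mulVec, sum_mulVec']
  simp only [Pi.smul_apply, Finset.sum_apply, Matrix.smul_mulVec,
    Matrix.mulVec_single_one, Matrix.col_apply, mul_one, smul_eq_mul, Matrix.smul_apply]
  congr 1
  refine Finset.sum_congr rfl fun j hj => ?_
  rw [rdq_pow_entry]
  congr 2 <;> ring



lemma Gvec_apply [Fact n.Prime] (k : ℕ) {m : ZMod n} (hm : m ≠ 0) (out : Pt n) :
    Gvec n k m out = if out.2 - out.1 = m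
      then ((Real.sqrt n : ℂ))⁻¹ * (E n ((k : ZMod n) * (out.1 * m⁻¹)))⁻¹ else 0 := by
  rw [Gvec_eq]
  dsimp only
  by_cases h : out.2 - out.1 = m
  · have hj0lt : (out.1 * m⁻¹).val < n := ZMod.val_lt _
    have hj0c : (((out.1 * m⁻¹).val : ℕ) : ZMod n) = out.1 * m⁻¹ :=
      ZMod.natCast_rightInverse _
    have hcond : ∀ j ∈ Finset.range n,
        (out = (((j : ZMod n) * m, m + (j : ZMod n) * m) : Pt n)) ↔ j = (out.1 * m⁻¹).val := by
      intro j hj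
      constructor
      · intro he
        have h1 : (j : ZMod n) * m = out.1 := by rw [he]
        have h2 : (j : ZMod n) = out.1 * m⁻¹ := by
          rw [← h1, mul_assoc, mul_inv_cancel₀ hm, mul_one]
        rw [← ZMod.val_cast_of_lt (Finset.mem_range.1 hj), h2]
      · rintro rfl
        have h1 : (((out.1 * m⁻¹).val : ℕ) : ZMod n) * m = out.1 := by
          rw [hj0c, mul_assoc, inv_mul_cancel₀ hm, mul_one]
        have h2 : out.2 = out.1 + m := by rw [← h, add_sub_cancel]
        refine Prod.ext h1.symm ?_
        rw [h1, h2, add_comm]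
    have hterm : ∀ j ∈ Finset.range n,
        dqω n ^ (-((k * j : ℕ) : ℤ)) *
          (if out = (((j : ZMod n) * m, m + (j : ZMod n) * m) : Pt n) then (1:ℂ) else 0) =
        if j = (out.1 * m⁻¹).val then dqω n ^ (-((k * j : ℕ) : ℤ)) else 0 := by
      intro j hj
      simp only [hcond j hj]
      split <;> simp
    rw [Finset.sum_congr rfl hterm, Finset.sum_ite_eq' (Finset.range n) _ _,
      if_pos (Finset.mem_range.2 hj0lt), if_pos h]
    congr 1
    rw [_root_.zpow_neg, zpow_natCast]
    congr 1
    rw [← E_def]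
    congr 1
    push_cast [hj0c]
    ring
  · rw [if_neg h]
    have : ∀ j ∈ Finset.range n,
        dqω n ^ (-((k * j : ℕ) : ℤ)) *
          (if out = (((j : ZMod n) * m, m + (j : ZMod n) * m) : Pt n) then (1:ℂ) else 0) = 0 := by
      intro j hj
      rw [if_neg, mul_zero]
      intro he
      apply h
      rw [he]
      simp
    rw [Finset.sum_eq_zero this, mul_zero]


/-! ### dotc lemmas -/

lemma dotc_zero (u : Pt n → ℂ) : dotc u (0 : Pt n → ℂ) = 0 := by
  simp [dotc]

lemma dotc_sum {ι : Type*} (s : Finset ι) (u : Pt n → ℂ) (f : ι → (Pt n → ℂ)) :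
    dotc u (∑ j ∈ s, f j) = ∑ j ∈ s, dotc u (f j) := by
  rw [dotc]
  simp only [Finset.sum_apply, Finset.mul_sum]
  rw [Finset.sum_comm]
  rfl

lemma dotc_smul (c : ℂ) (u v : Pt n → ℂ) : dotc u (c • v) = c * dotc u v := by
  simp only [dotc, Pi.smul_apply, smul_eq_mul, Finset.mul_sum]
  exact Finset.sum_congr rfl fun f _ => by ring

lemma dotc_smul_left (c : ℂ) (u v : Pt n → ℂ) :
    dotc (c • u) v = (starRingEnd ℂ) c * dotc u v := by
  simp only [dotc, Pi.smul_apply, smul_eq_mul, _root_.map_mul, Finset.mul_sum]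
  exact Finset.sum_congr rfl fun f _ => by ring

lemma li_of_orthonormal {ι : Type*} [DecidableEq ι] (v : ι → (Pt n → ℂ))
    (h : ∀ i j, dotc (v i) (v j) = if i = j then 1 else 0) : LinearIndependent ℂ v := by
  rw [linearIndependent_iff']
  intro s g hs i hi
  have h1 := congrArg (dotc (v i)) hs
  rw [dotc_zero, dotc_sum] at h1
  have h2 : ∀ j ∈ s, dotc (v i) (g j • v j) = if i = j then g j else 0 := by
    intro j _
    rw [dotc_smul, h i j]
    split <;> simp
  rw [Finset.sum_congr rfl h2, Finset.sum_ite_eq (s) i g, if_pos hi] at h1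
  exact h1

/-! ### orthonormality -/

lemma conj_c : (starRingEnd ℂ) (((Real.sqrt n : ℂ)))⁻¹ = ((Real.sqrt n : ℂ))⁻¹ := by
  rw [map_inv₀, Complex.conj_ofReal]

lemma c_mul_c : ((Real.sqrt n : ℂ))⁻¹ * ((Real.sqrt n : ℂ))⁻¹ = ((n : ℕ) : ℂ)⁻¹ := by
  rw [← mul_inv]
  congr 1
  rw [← Complex.ofReal_mul, Real.mul_self_sqrt (by positivity)]
  norm_num

lemma dotc_Gvec [Fact n.Prime] (k : ℕ) {m m' : ZMod n} (hm : m ≠ 0) (hm' : m' ≠ 0) :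
    dotc (Gvec n k m) (Gvec n k m') = if m = m' then 1 else 0 := by
  by_cases hmm : m = m'
  · subst hmm
    rw [if_pos rfl, dotc]
    have hterm : ∀ f : Pt n, (starRingEnd ℂ) (Gvec n k m f) * Gvec n k m f =
        if f.2 - f.1 = m then ((n : ℕ) : ℂ)⁻¹ else 0 := by
      intro f
      rw [Gvec_apply n k hm f]
      split
      · rw [_root_.map_mul, map_inv₀, Complex.conj_ofReal, map_inv₀, conj_E, inv_inv,
          mul_mul_mul_comm, mul_inv_cancel₀ (E_ne n _), mul_one, c_mul_c]
      · simp
    rw [Finset.sum_congr rfl (fun f _ => hterm f), Fintype.sum_prod_type]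
    have hinner : ∀ x : ZMod n,
        (∑ y : ZMod n, if y - x = m then ((n : ℕ) : ℂ)⁻¹ else 0) = ((n : ℕ) : ℂ)⁻¹ := by
      intro x
      have : ∀ y : ZMod n, (if y - x = m then ((n : ℕ) : ℂ)⁻¹ else 0)
          = if y = m + x then ((n : ℕ) : ℂ)⁻¹ else 0 := by
        intro y
        congr 1
        simp [sub_eq_iff_eq_add]
      simp only [this]
      rw [Finset.sum_ite_eq' Finset.univ (m + x) (fun _ => ((n : ℕ) : ℂ)⁻¹),
        if_pos (Finset.mem_univ _)]
    simp only [hinner]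
    rw [Finset.sum_const, Finset.card_univ, ZMod.card]
    rw [nsmul_eq_mul, mul_inv_cancel₀ (Nat.cast_ne_zero.2 (NeZero.ne n))]
  · rw [if_neg hmm]
    apply Finset.sum_eq_zero
    intro f _
    rw [Gvec_apply n k hm f, Gvec_apply n k hm' f]
    by_cases h1 : f.2 - f.1 = m
    · rw [if_pos h1, if_neg (fun h2 => hmm (by rw [← h1, h2])), mul_zero]
    · rw [if_neg h1, map_zero, zero_mul]

lemma dotc_single_single (p q : Pt n) :
    dotc (Pi.single p (1:ℂ)) (Pi.single q (1:ℂ)) = if p = q then 1 else 0 := by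
  rw [dotc]
  have hterm : ∀ f : Pt n, (starRingEnd ℂ) ((Pi.single p 1 : Pt n → ℂ) f) * (Pi.single q 1 : Pt n → ℂ) f =
      if f = p then (if f = q then 1 else 0) else 0 := by
    intro f
    rw [Pi.single_apply, Pi.single_apply, apply_ite (starRingEnd ℂ), _root_.map_one, map_zero]
    split <;> simp
  rw [Finset.sum_congr rfl (fun f _ => hterm f),
    Finset.sum_ite_eq' Finset.univ p (fun f => if f = q then (1:ℂ) else 0),
    if_pos (Finset.mem_univ _)]

lemma Gvec_diag_zero [Fact n.Prime] (k : ℕ) {m : ZMod n} (hm : m ≠ 0) (a : ZMod n) :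
    Gvec n k m (a, a) = 0 := by
  rw [Gvec_apply n k hm, if_neg]
  intro hc
  exact hm (by rw [← hc]; simp)

lemma dotc_Gvec_single [Fact n.Prime] (k : ℕ) {m : ZMod n} (hm : m ≠ 0) (a : ZMod n) :
    dotc (Gvec n k m) (Pi.single ((a, a) : Pt n) (1:ℂ)) = 0 := by
  rw [dotc]
  have hterm : ∀ f : Pt n, (starRingEnd ℂ) (Gvec n k m f) * (Pi.single (a,a) 1 : Pt n → ℂ) f =
      if f = ((a,a) : Pt n) then (starRingEnd ℂ) (Gvec n k m f) else 0 := by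
    intro f
    rw [Pi.single_apply]
    split <;> simp
  rw [Finset.sum_congr rfl (fun f _ => hterm f),
    Finset.sum_ite_eq' Finset.univ _ (fun f => (starRingEnd ℂ) (Gvec n k m f)),
    if_pos (Finset.mem_univ _), Gvec_diag_zero n k hm a, map_zero]

lemma dotc_single_Gvec [Fact n.Prime] (k : ℕ) {m : ZMod n} (hm : m ≠ 0) (a : ZMod n) :
    dotc (Pi.single ((a, a) : Pt n) (1:ℂ)) (Gvec n k m) = 0 := by
  rw [dotc]
  have hterm : ∀ f : Pt n, (starRingEnd ℂ) ((Pi.single (a,a) 1 : Pt n → ℂ) f) * Gvec n k m f =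
      if f = ((a,a) : Pt n) then Gvec n k m f else 0 := by
    intro f
    rw [Pi.single_apply, apply_ite (starRingEnd ℂ), _root_.map_one, map_zero]
    split <;> simp
  rw [Finset.sum_congr rfl (fun f _ => hterm f),
    Finset.sum_ite_eq' Finset.univ _ (fun f => Gvec n k m f),
    if_pos (Finset.mem_univ _), Gvec_diag_zero n k hm a]

/-! ### eigenvector lemmas -/

lemma mulVecLin_apply' (v : Pt n → ℂ) :
    (rdq n).mulVecLin v = fun out => v (2 * out.1 - out.2, out.1) := by
  rw [Matrix.mulVecLin_apply, rdq_mulVec]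

/-- the underlying permutation (inverse direction) as an equiv -/
def sqe : Pt n ≃ Pt n where
  toFun p := (2 * p.1 - p.2, p.1)
  invFun p := (p.2, 2 * p.2 - p.1)
  left_inv p := Prod.ext rfl (by dsimp; ring)
  right_inv p := Prod.ext (by dsimp; ring) rfl

lemma dotc_mulVecLin (u w : Pt n → ℂ) :
    dotc ((rdq n).mulVecLin u) ((rdq n).mulVecLin w) = dotc u w := by
  rw [mulVecLin_apply', mulVecLin_apply', dotc, dotc]
  exact Equiv.sum_comp (sqe n) (fun p => (starRingEnd ℂ) (u p) * w p)

lemma Gvec_eig [Fact n.Prime] (k : ℕ) {m : ZMod n} (hm : m ≠ 0) :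
    (rdq n).mulVecLin (Gvec n k m) = dqω n ^ k • Gvec n k m := by
  rw [mulVecLin_apply']
  funext out
  rw [Pi.smul_apply, smul_eq_mul, Gvec_apply n k hm, Gvec_apply n k hm]
  dsimp only
  have hc : out.1 - (2 * out.1 - out.2) = out.2 - out.1 := by ring
  rw [hc]
  by_cases h : out.2 - out.1 = m
  · rw [if_pos h, if_pos h]
    have hxy : 2 * out.1 - out.2 = out.1 - m := by rw [← h]; ring
    rw [hxy]
    have h1 : (out.1 - m) * m⁻¹ = out.1 * m⁻¹ - 1 := by
      rw [sub_mul, mul_inv_cancel₀ hm]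
    have harg : (k : ZMod n) * ((out.1 - m) * m⁻¹)
        = (k : ZMod n) * (out.1 * m⁻¹) + (-(k : ZMod n)) := by
      rw [h1]; ring
    rw [harg, E_add, mul_inv]
    have h2 : (E n (-(k : ZMod n)))⁻¹ = E n ((k : ZMod n)) := by
      rw [E_inv, neg_neg]
    rw [h2, E_def]
    ring
  · rw [if_neg h, if_neg h, mul_zero]

lemma diag_eig (a : ZMod n) :
    (rdq n).mulVecLin (Pi.single ((a, a) : Pt n) 1) = (1 : ℂ) • (Pi.single ((a, a)) 1 : Pt n → ℂ) := by
  rw [mulVecLin_apply', one_smul]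
  funext out
  rw [Pi.single_apply, Pi.single_apply]
  congr 1
  simp only [Prod.ext_iff, eq_iff_iff]
  constructor
  · rintro ⟨h1, h2⟩
    exact ⟨h2, by linear_combination 2 * h2 - h1⟩
  · rintro ⟨h1, h2⟩
    exact ⟨by linear_combination 2 * h1 - h2, h1⟩

lemma eig_base {u : Pt n → ℂ} {μ : ℂ} (hu : (rdq n).mulVecLin u = μ • u) (p : Pt n) :
    u p = μ * u (p.2, 2 * p.2 - p.1) := by
  have h := congrFun hu ((p.2, 2 * p.2 - p.1) : Pt n)
  rw [mulVecLin_apply'] at h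
  dsimp only at h
  rw [Pi.smul_apply, smul_eq_mul] at h
  have hp : ((2 * p.2 - (2 * p.2 - p.1), p.2) : Pt n) = p :=
    Prod.ext (by dsimp; ring) rfl
  rw [hp] at h
  exact h

lemma eig_iter {u : Pt n → ℂ} {μ : ℂ} (hu : (rdq n).mulVecLin u = μ • u) :
    ∀ (j : ℕ) (p : Pt n), u p =
      μ ^ j * u (p.1 + (j : ZMod n) * (p.2 - p.1), p.2 + (j : ZMod n) * (p.2 - p.1)) := by
  intro j
  induction j with
  | zero => intro p; simp
  | succ j ih =>
    intro p
    rw [eig_base n hu p, ih ((p.2, 2 * p.2 - p.1) : Pt n)]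
    dsimp only
    have hQ : ((p.2 + (j : ZMod n) * (2 * p.2 - p.1 - p.2),
        2 * p.2 - p.1 + (j : ZMod n) * (2 * p.2 - p.1 - p.2)) : Pt n)
        = ((p.1 + ((j + 1 : ℕ) : ZMod n) * (p.2 - p.1),
            p.2 + ((j + 1 : ℕ) : ZMod n) * (p.2 - p.1)) : Pt n) := by
      refine Prod.ext ?_ ?_ <;> (dsimp; push_cast; ring)
    rw [hQ, pow_succ]
    ring

lemma diag_val {u : Pt n → ℂ} {μ : ℂ} (hu : (rdq n).mulVecLin u = μ • u) (hμ : μ ≠ 1)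
    (a : ZMod n) : u (a, a) = 0 := by
  have h := eig_base n hu ((a, a) : Pt n)
  have hp : ((a, 2 * a - a) : Pt n) = ((a, a) : Pt n) := by
    refine Prod.ext rfl ?_; dsimp; ring
  rw [hp] at h
  have h2 : (1 - μ) * u (a, a) = 0 := by linear_combination h
  rcases mul_eq_zero.1 h2 with h3 | h3
  · exact absurd (by linear_combination -h3) hμ
  · exact h3

lemma eig_decomp [Fact n.Prime] (k : ℕ) {u : Pt n → ℂ}
    (hu : (rdq n).mulVecLin u = (dqω n ^ k) • u) :
    u = (∑ m : {m : ZMod n // m ≠ 0}, (((Real.sqrt n : ℂ)) * u (0, m.1)) • Gvec n k m.1)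
        + ∑ a : ZMod n, u (a, a) • (Pi.single ((a, a) : Pt n) 1 : Pt n → ℂ) := by
  funext out
  rw [Pi.add_apply, Finset.sum_apply, Finset.sum_apply]
  simp only [Pi.smul_apply, smul_eq_mul]
  by_cases h : out.1 = out.2
  · have h1 : ∀ m : {m : ZMod n // m ≠ 0},
        ((Real.sqrt n : ℂ)) * u (0, m.1) * Gvec n k m.1 out = 0 := by
      intro m
      have : Gvec n k m.1 out = 0 := by
        rw [Gvec_apply n k m.2, if_neg]
        intro hc
        exact m.2 (by rw [← hc, ← h, sub_self])
      rw [this, mul_zero]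
    rw [Finset.sum_eq_zero (fun m _ => h1 m), zero_add]
    have h2 : ∀ a : ZMod n, u (a, a) * (Pi.single ((a, a) : Pt n) 1 : Pt n → ℂ) out =
        if a = out.1 then u out else 0 := by
      intro a
      rw [Pi.single_apply]
      by_cases ha : a = out.1
      · rw [if_pos ha, if_pos (by rw [ha]; exact (Prod.ext_iff.2 ⟨rfl, h⟩ : ((out.1, out.1) : Pt n) = out).symm), mul_one, ha]
        exact congrArg u (Prod.ext_iff.2 ⟨rfl, h⟩ : ((out.1, out.1) : Pt n) = out)
      · rw [if_neg ha, if_neg, mul_zero]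
        intro hc
        exact ha (by rw [hc])
    rw [Finset.sum_congr rfl (fun a _ => h2 a),
      Finset.sum_ite_eq' Finset.univ out.1 (fun _ => u out), if_pos (Finset.mem_univ _)]
  · have hm0 : out.2 - out.1 ≠ 0 := sub_ne_zero.2 (Ne.symm h)
    have h2 : ∀ a : ZMod n, u (a, a) * (Pi.single ((a, a) : Pt n) 1 : Pt n → ℂ) out = 0 := by
      intro a
      rw [Pi.single_apply, if_neg, mul_zero]
      intro hc
      exact h (by rw [hc])
    rw [Finset.sum_eq_zero (fun a _ => h2 a), add_zero]
    rw [Finset.sum_eq_single (⟨out.2 - out.1, hm0⟩ : {m : ZMod n // m ≠ 0})]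
    · rw [Gvec_apply n k hm0, if_pos rfl]
      have hiter := eig_iter n hu ((out.1 * (out.2 - out.1)⁻¹).val) ((0, out.2 - out.1) : Pt n)
      dsimp only at hiter
      have hval : (((out.1 * (out.2 - out.1)⁻¹).val : ℕ) : ZMod n)
          = out.1 * (out.2 - out.1)⁻¹ := ZMod.natCast_rightInverse _
      have hpt : ((0 + (((out.1 * (out.2 - out.1)⁻¹).val : ℕ) : ZMod n) * (out.2 - out.1 - 0),
          out.2 - out.1 + (((out.1 * (out.2 - out.1)⁻¹).val : ℕ) : ZMod n) * (out.2 - out.1 - 0))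
            : Pt n) = out := by
        rw [hval]
        refine Prod.ext ?_ ?_ <;> dsimp
        · rw [zero_add, sub_zero, mul_assoc, inv_mul_cancel₀ hm0, mul_one]
        · rw [sub_zero, mul_assoc, inv_mul_cancel₀ hm0, mul_one]
          ring
      rw [hpt] at hiter
      have hpow : (dqω n ^ k) ^ ((out.1 * (out.2 - out.1)⁻¹).val)
          = E n ((k : ZMod n) * (out.1 * (out.2 - out.1)⁻¹)) := by
        rw [← pow_mul, ← E_def]
        congr 1
        push_cast [hval]
        ring
      rw [hpow] at hiter
      -- hiter : u (0, out.2 - out.1) = E .. * u out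
      rw [hiter]
      have hEne := E_ne n ((k : ZMod n) * (out.1 * (out.2 - out.1)⁻¹))
      have hsne : ((Real.sqrt n : ℂ)) ≠ 0 := by
        simp only [ne_eq, Complex.ofReal_eq_zero]
        exact (Real.sqrt_pos.mpr (by exact_mod_cast Nat.pos_of_ne_zero (NeZero.ne n))).ne'
      have hgen : ∀ (s e c : ℂ), s ≠ 0 → e ≠ 0 → s * (e * c) * (s⁻¹ * e⁻¹) = c := by
        intro s e c hs he
        field_simp
      exact (hgen _ _ _ hsne hEne).symm
    · intro m _ hne
      rw [Gvec_apply n k m.2, if_neg, mul_zero]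
      intro hc
      exact hne (Subtype.ext hc.symm)
    · intro habs
      exact absurd (Finset.mem_univ _) habs

/-! ### spectral projections -/

def B (c : ZMod n) (out : Pt n) : Pt n :=
  (out.1 - c * (out.2 - out.1), out.2 - c * (out.2 - out.1))

def pv (k : ℕ) (u : Pt n → ℂ) : Pt n → ℂ := fun out =>
  ((n : ℕ) : ℂ)⁻¹ * ∑ c : ZMod n, (E n ((k : ZMod n) * c))⁻¹ * u (B n c out)

lemma pv_eig (k : ℕ) (u : Pt n → ℂ) :
    (rdq n).mulVecLin (pv n k u) = (dqω n ^ k) • pv n k u := by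
  rw [mulVecLin_apply']
  funext out
  rw [Pi.smul_apply, smul_eq_mul, pv, pv]
  have hB : ∀ c : ZMod n, B n c ((2 * out.1 - out.2, out.1) : Pt n) = B n (c + 1) out := by
    intro c
    unfold B
    refine Prod.ext ?_ ?_ <;> (dsimp; ring)
  simp only [hB]
  have hre : (∑ c : ZMod n, (E n ((k : ZMod n) * c))⁻¹ * u (B n (c + 1) out))
      = ∑ c : ZMod n, (E n ((k : ZMod n) * (c - 1)))⁻¹ * u (B n c out) := by
    apply Fintype.sum_equiv (Equiv.addRight (1 : ZMod n))
    intro c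
    simp [Equiv.coe_addRight]
  rw [hre]
  rw [Finset.mul_sum, Finset.mul_sum, Finset.mul_sum]
  apply Finset.sum_congr rfl
  intro c _
  have h1 : (k : ZMod n) * c = (k : ZMod n) * (c - 1) + (k : ZMod n) := by ring
  have h2 : (E n ((k : ZMod n) * (c - 1)))⁻¹ = dqω n ^ k * (E n ((k : ZMod n) * c))⁻¹ := by
    rw [h1, E_add, mul_inv, E_def, mul_comm ((E n ((k : ZMod n) * (c - 1)))⁻¹),
      ← mul_assoc, mul_inv_cancel₀ (pow_ne_zero k (hωne n)), one_mul]
  rw [h2]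
  ring

lemma pv_sum (u : Pt n → ℂ) : (∑ k ∈ Finset.range n, pv n k u) = u := by
  funext out
  rw [Finset.sum_apply]
  simp only [pv]
  rw [← Finset.mul_sum, Finset.sum_comm]
  have hswap : (∑ c : ZMod n, ∑ k ∈ Finset.range n, (E n ((k : ZMod n) * c))⁻¹ * u (B n c out))
      = ∑ c : ZMod n, (∑ k ∈ Finset.range n, (E n ((k : ZMod n) * c))⁻¹) * u (B n c out) := by
    exact Finset.sum_congr rfl fun c _ => (Finset.sum_mul _ _ _).symm
  rw [hswap]
  have hchar : ∀ c : ZMod n,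
      (∑ k ∈ Finset.range n, (E n ((k : ZMod n) * c))⁻¹) = if c = 0 then ((n : ℕ) : ℂ) else 0 := by
    intro c
    have h1 : ∀ k : ZMod n, (E n (k * c))⁻¹ = E n (k * (-c)) := by
      intro k
      rw [E_inv, neg_mul_eq_mul_neg]
    have h2 : (∑ k ∈ Finset.range n, (E n ((k : ZMod n) * c))⁻¹)
        = ∑ w : ZMod n, E n (w * (-c)) := by
      rw [sum_zmod_eq_range n (fun w => (E n (w * c))⁻¹)]
      exact Finset.sum_congr rfl fun w _ => h1 w
    rw [h2, sum_E]
    simp [neg_eq_zero]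
  have hterm : ∀ c : ZMod n,
      (∑ k ∈ Finset.range n, (E n ((k : ZMod n) * c))⁻¹) * u (B n c out)
      = if c = 0 then ((n : ℕ) : ℂ) * u (B n c out) else 0 := by
    intro c
    rw [hchar c]
    split <;> simp
  rw [Finset.sum_congr rfl (fun c _ => hterm c)]
  have : ∀ c : ZMod n, (if c = 0 then ((n : ℕ) : ℂ) * u (B n c out) else 0)
      = if c = 0 then ((n : ℕ) : ℂ) * u (B n 0 out) else 0 := by
    intro c
    split
    · rename_i hc; rw [hc]
    · rfl
  rw [Finset.sum_congr rfl (fun c _ => this c),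
    Finset.sum_ite_eq' Finset.univ (0 : ZMod n) (fun _ => ((n : ℕ) : ℂ) * u (B n 0 out)),
    if_pos (Finset.mem_univ _)]
  have hB0 : B n 0 out = out := by
    unfold B
    refine Prod.ext ?_ ?_ <;> (dsimp; ring)
  rw [hB0, inv_mul_cancel_left₀ (Nat.cast_ne_zero.2 (NeZero.ne n))]

/-! ### eigenspace characterizations -/

lemma eig_eq_span [Fact n.Prime] (k : ℕ) (hk1 : dqω n ^ k ≠ 1) :
    Module.End.eigenspace ((rdq n).mulVecLin) ((dqω n) ^ k) =
      Submodule.span ℂ (Set.range fun m : {m : ZMod n // m ≠ 0} => Gvec n k m.1) := by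
  apply le_antisymm
  · intro u hu
    rw [Module.End.mem_eigenspace_iff] at hu
    rw [eig_decomp n k hu]
    have hzero : (∑ a : ZMod n, u (a, a) • (Pi.single ((a, a) : Pt n) 1 : Pt n → ℂ)) = 0 :=
      Finset.sum_eq_zero fun a _ => by rw [diag_val n hu hk1 a, zero_smul]
    rw [hzero, add_zero]
    exact Submodule.sum_smul_mem _ _ fun m _ => Submodule.subset_span ⟨m, rfl⟩
  · rw [Submodule.span_le]
    rintro v ⟨m, rfl⟩
    rw [SetLike.mem_coe, Module.End.mem_eigenspace_iff]
    exact Gvec_eig n k m.2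

lemma eig_one_eq_span [Fact n.Prime] :
    Module.End.eigenspace ((rdq n).mulVecLin) 1
      = Submodule.span ℂ (Set.range (eigOneBasis n)) := by
  apply le_antisymm
  · intro u hu
    rw [Module.End.mem_eigenspace_iff, one_smul] at hu
    have hu' : (rdq n).mulVecLin u = (dqω n ^ n) • u := by rw [hω1, one_smul]; exact hu
    rw [eig_decomp n n hu']
    apply Submodule.add_mem
    · exact Submodule.sum_smul_mem _ _ fun m _ => Submodule.subset_span ⟨Sum.inl m, rfl⟩
    · exact Submodule.sum_smul_mem _ _ fun a _ => Submodule.subset_span ⟨Sum.inr a, rfl⟩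
  · rw [Submodule.span_le]
    rintro v ⟨i, rfl⟩
    rw [SetLike.mem_coe, Module.End.mem_eigenspace_iff]
    cases i with
    | inl m =>
      show (rdq n).mulVecLin (Gvec n n m.1) = (1 : ℂ) • Gvec n n m.1
      rw [Gvec_eig n n m.2, hω1]
    | inr a => exact diag_eig n a

lemma Gvec_on [Fact n.Prime] (k : ℕ) (i j : {m : ZMod n // m ≠ 0}) :
    dotc (Gvec n k i.1) (Gvec n k j.1) = if i = j then 1 else 0 := by
  rw [dotc_Gvec n k i.2 j.2]
  by_cases h : i = j
  · rw [if_pos (by rw [h]), if_pos h]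
  · rw [if_neg (fun hh => h (Subtype.ext hh)), if_neg h]

lemma eigOne_on [Fact n.Prime] (i i' : ({m : ZMod n // m ≠ 0} ⊕ ZMod n)) :
    dotc (eigOneBasis n i) (eigOneBasis n i') = if i = i' then 1 else 0 := by
  rcases i with m | a <;> rcases i' with m' | a' <;>
    simp only [eigOneBasis, Sum.elim_inl, Sum.elim_inr]
  · rw [dotc_Gvec n n m.2 m'.2]
    by_cases h : m = m'
    · rw [if_pos (by rw [h]), if_pos (by rw [h])]
    · rw [if_neg (fun hh => h (Subtype.ext hh)), if_neg (by simp [h])]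
  · rw [dotc_Gvec_single n n m.2 a', if_neg (by simp)]
  · rw [dotc_single_Gvec n n m'.2 a, if_neg (by simp)]
  · rw [dotc_single_single]
    by_cases h : a = a'
    · rw [if_pos (by rw [h]), if_pos (by rw [h])]
    · rw [if_neg (fun hh => h (Prod.ext_iff.1 hh).1), if_neg (by simp [h])]

lemma card_ne_zero' : Fintype.card {m : ZMod n // m ≠ 0} = n - 1 := by
  have h := Fintype.card_subtype_compl (fun m : ZMod n => m = 0)
  rw [ZMod.card, Fintype.card_subtype_eq] at h
  exact h

end S19

open S19 in
/-- for `n` an odd prime, `V ⊗ V` decomposes as the orthogonal direct sum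
of the eigenspaces of the dihedral quandle braid matrix `r`: the eigenspace of `ω^k`
(`1 ≤ k ≤ n−1`) has dimension `n − 1` with orthonormal basis `G_k(e_0 ⊗ e_m)`, `m ≠ 0`,
while the eigenspace of `1` has dimension `2n − 1` with orthonormal basis
`{G_n(e_0 ⊗ e_m) : m ≠ 0} ∪ {e_m ⊗ e_m}`. -/
theorem stmt19 (n : ℕ) [NeZero n] (hp : n.Prime) (hodd : Odd n) :
    (∀ k : ℕ, 1 ≤ k → k ≤ n - 1 →
      Module.finrank ℂ
          (Module.End.eigenspace ((rdq n).mulVecLin) ((dqω n) ^ k)) = n - 1 ∧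
      (∀ m m' : ZMod n, m ≠ 0 → m' ≠ 0 →
        dotc (Gvec n k m) (Gvec n k m') = if m = m' then 1 else 0) ∧
      Module.End.eigenspace ((rdq n).mulVecLin) ((dqω n) ^ k) =
        Submodule.span ℂ (Set.range fun m : {m : ZMod n // m ≠ 0} => Gvec n k m.1)) ∧
    (Module.finrank ℂ (Module.End.eigenspace ((rdq n).mulVecLin) 1) = 2 * n - 1) ∧
    (∀ i i' : ({m : ZMod n // m ≠ 0} ⊕ ZMod n),
      dotc (eigOneBasis n i) (eigOneBasis n i') = if i = i' then 1 else 0) ∧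
    (Module.End.eigenspace ((rdq n).mulVecLin) 1 =
      Submodule.span ℂ (Set.range (eigOneBasis n))) ∧
    ((⨆ k ∈ Finset.range n,
        Module.End.eigenspace ((rdq n).mulVecLin) ((dqω n) ^ k)) = ⊤) ∧
    (∀ k k' : ℕ, k < n → k' < n → k ≠ k' →
      ∀ u ∈ Module.End.eigenspace ((rdq n).mulVecLin) ((dqω n) ^ k),
      ∀ w ∈ Module.End.eigenspace ((rdq n).mulVecLin) ((dqω n) ^ k'),
        dotc u w = 0) := by
  haveI : Fact n.Prime := ⟨hp⟩
  have hn2 : 2 ≤ n := hp.two_le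
  refine ⟨?_, ?_, eigOne_on n, eig_one_eq_span n, ?_, ?_⟩
  · -- eigenvalue ω^k, 1 ≤ k ≤ n-1
    intro k hk1 hk2
    have hkn : k < n := by omega
    have hne1 : dqω n ^ k ≠ 1 := by
      intro h
      have h0 := (hωprim n).pow_inj hkn (show 0 < n by omega) (by rw [h, pow_zero])
      omega
    refine ⟨?_, fun m m' hm hm' => dotc_Gvec n k hm hm', eig_eq_span n k hne1⟩
    rw [eig_eq_span n k hne1,
      finrank_span_eq_card (li_of_orthonormal n _ (Gvec_on n k)), card_ne_zero' n]
  · -- finrank of eigenspace 1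
    rw [eig_one_eq_span n,
      finrank_span_eq_card (li_of_orthonormal n _ (eigOne_on n)), Fintype.card_sum,
      card_ne_zero' n, ZMod.card]
    omega
  · -- supremum is top
    rw [eq_top_iff]
    intro u _
    rw [← pv_sum n u]
    apply Submodule.sum_mem
    intro k hk
    exact Submodule.mem_iSup_of_mem k (Submodule.mem_iSup_of_mem hk
      (Module.End.mem_eigenspace_iff.2 (pv_eig n k u)))
  · -- orthogonality of distinct eigenspaces
    intro k k' hk hk' hkk' u hu w hw
    rw [Module.End.mem_eigenspace_iff] at hu hw
    have h1 : dotc u w = (starRingEnd ℂ) (dqω n ^ k) * (dqω n ^ k' * dotc u w) := by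
      conv_lhs => rw [← dotc_mulVecLin n u w]
      rw [hu, hw, dotc_smul_left, dotc_smul]
    have hconj : (starRingEnd ℂ) (dqω n ^ k) = (dqω n ^ k)⁻¹ :=
      eq_inv_of_mul_eq_one_left (conj_ω_pow n k)
    have hnep : dqω n ^ k ≠ dqω n ^ k' := fun he => hkk' ((hωprim n).pow_inj hk hk' he)
    by_contra hd
    apply hnep
    have h2 := congrArg (fun z => dqω n ^ k * z) h1
    rw [hconj, ← mul_assoc, mul_inv_cancel₀ (pow_ne_zero _ (hωne n)), one_mul] at h2
    exact mul_right_cancel₀ hd h2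


end
end
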